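/- Let T ≥ 2 be an integer, and let H ≥ 1 and S ≥ 1 be real numbers. Let R ⊆ {1,…,T} be a set of episodes (the 'real' episodes). For t = 1,…,T let ζ_t ≥ 0 and q_t > 0 be real numbers, and define positive reals η_1, η_2, …, η_{T+1} recursively from an arbitrary η_1 > 0 by: 1/η_{t+1} = 1/η_t + η_t·ζ_t/(q_t²·ln T) if t ∈ R, and 1/η_{t+1} = (1/η_t)·(1 + 1/(324·H·ln T)) if t ∉ R. Assume that for every t ∈ R one has ζ_t ≤ H² and η_t/q_t ≤ 1/(18·√(H³·S)). Then for every t ∈ {1,…,T}: η_t · √( Σ_{τ ∈ R, τ ≤ t} ζ_τ/q_τ² ) ≤ 2·√(ln T). -/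

import Mathlib

set_option maxHeartbeats 1000000


/-- Learning-rate bound for the adaptive log-barrier learning rates in the
policy-optimization algorithm: real episodes `t ∈ R` update
`1/η (t+1) = 1/η t + η t · ζ t / (q t² · ln T)`, virtual episodes shrink the learning
rate by the factor `1 + 1/(324·H·ln T)`; under `ζ t ≤ H²` and
`η t / q t ≤ 1/(18·√(H³·S))` on real episodes, for every `t ∈ {1,…,T}`,
`η t · √(∑_{τ ∈ R, τ ≤ t} ζ τ / q τ²) ≤ 2·√(ln T)`. -/
theorem learning_rate_bound_policy
    (T : ℕ) (hT : 2 ≤ T) (H S : ℝ) (hH : 1 ≤ H) (hS : 1 ≤ S)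
    (R : Finset ℕ) (hR : R ⊆ Finset.Icc 1 T)
    (ζ q : ℕ → ℝ)
    (hζ : ∀ t ∈ Finset.Icc 1 T, 0 ≤ ζ t)
    (hq : ∀ t ∈ Finset.Icc 1 T, 0 < q t)
    (η : ℕ → ℝ)
    (hηpos : ∀ t ∈ Finset.Icc 1 (T + 1), 0 < η t)
    (hrecReal : ∀ t ∈ Finset.Icc 1 T, t ∈ R →
      1 / η (t + 1) = 1 / η t + η t * ζ t / (q t ^ 2 * Real.log T))
    (hrecVirtual : ∀ t ∈ Finset.Icc 1 T, t ∉ R →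
      1 / η (t + 1) = (1 / η t) * (1 + 1 / (324 * H * Real.log T)))
    (hζH : ∀ t ∈ R, ζ t ≤ H ^ 2)
    (hηq : ∀ t ∈ R, η t / q t ≤ 1 / (18 * Real.sqrt (H ^ 3 * S))) :
    ∀ t ∈ Finset.Icc 1 T,
      η t * Real.sqrt (∑ τ ∈ R.filter (fun τ => τ ≤ t), ζ τ / q τ ^ 2) ≤
        2 * Real.sqrt (Real.log T) := by
  have hL2 : (0.6931471803 : ℝ) < Real.log 2 := Real.log_two_gt_d9
  have hLT : Real.log 2 ≤ Real.log T := by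
    apply Real.log_le_log (by norm_num)
    exact_mod_cast hT
  have hL : (0.69 : ℝ) < Real.log T := by linarith
  -- positivity of η on relevant indices
  have hηp : ∀ t ∈ Finset.Icc 1 T, 0 < η t := by
    intro t ht
    apply hηpos
    simp only [Finset.mem_Icc] at ht ⊢
    omega
  have hηp' : ∀ t ∈ Finset.Icc 1 T, 0 < η (t + 1) := by
    intro t ht
    apply hηpos
    simp only [Finset.mem_Icc] at ht ⊢
    omega
  -- key per-step bound
  have hA : ∀ t ∈ R, η t ^ 2 * (ζ t / q t ^ 2) ≤ 1 / 324 := by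
    intro t ht
    have htI : t ∈ Finset.Icc 1 T := hR ht
    have hqt := hq t htI
    have hηt := hηp t htI
    have hHS : (0:ℝ) < H ^ 3 * S := by positivity
    have hs : 0 < Real.sqrt (H ^ 3 * S) := Real.sqrt_pos.mpr hHS
    have hs2 : Real.sqrt (H ^ 3 * S) ^ 2 = H ^ 3 * S := Real.sq_sqrt hHS.le
    have h18 : η t * (18 * Real.sqrt (H ^ 3 * S)) ≤ q t := by
      have := hηq t ht
      rw [div_le_div_iff₀ hqt (by positivity)] at this
      linarith
    have hsq : 324 * (H ^ 3 * S) * η t ^ 2 ≤ q t ^ 2 := by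
      have h0 : 0 ≤ η t * (18 * Real.sqrt (H ^ 3 * S)) := by positivity
      nlinarith [mul_self_le_mul_self h0 h18]
    rw [show η t ^ 2 * (ζ t / q t ^ 2) = η t ^ 2 * ζ t / q t ^ 2 by ring,
      div_le_div_iff₀ (by positivity) (by norm_num)]
    have hζt := hζ t htI
    have hζHt := hζH t ht
    have hHS1 : (1:ℝ) ≤ H * S := by nlinarith
    have hH2 : H ^ 2 ≤ H ^ 3 * S := by
      nlinarith [mul_le_mul_of_nonneg_left hHS1 (sq_nonneg H)]
    have hstep : η t ^ 2 * ζ t ≤ η t ^ 2 * (H ^ 3 * S) :=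
      mul_le_mul_of_nonneg_left (le_trans hζHt hH2) (sq_nonneg (η t))
    nlinarith [hstep, hsq]
  -- monotonicity
  have hmono : ∀ t ∈ Finset.Icc 1 T, η (t + 1) ≤ η t := by
    intro t ht
    have hp := hηp t ht
    have hn := hηp' t ht
    have key : 1 / η t ≤ 1 / η (t + 1) := by
      by_cases hm : t ∈ R
      · rw [hrecReal t ht hm]
        have : 0 ≤ η t * ζ t / (q t ^ 2 * Real.log T) := by
          have := hζ t ht; have := hq t ht; positivity
        linarith
      · rw [hrecVirtual t ht hm]
        have h1 : 0 < 1 / (324 * H * Real.log T) := by positivity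
        have h2 : 0 < 1 / η t := by positivity
        nlinarith
    exact le_of_one_div_le_one_div hp key
  -- the partial sums
  set Z : ℕ → ℝ := fun t => ∑ τ ∈ R.filter (fun τ => τ ≤ t), ζ τ / q τ ^ 2 with hZdef
  have hZ0 : Z 0 = 0 := by
    have : R.filter (fun τ => τ ≤ 0) = ∅ := by
      apply Finset.filter_false_of_mem
      intro τ hτ
      have := hR hτ
      simp only [Finset.mem_Icc] at this
      omega
    simp only [hZdef]
    rw [this, Finset.sum_empty]
  have hZnonneg : ∀ t, 0 ≤ Z t := by
    intro t
    apply Finset.sum_nonneg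
    intro τ hτ
    have hτR := Finset.mem_of_mem_filter τ hτ
    have hτI := hR hτR
    have := hζ τ hτI; have := hq τ hτI
    positivity
  have hZstep : ∀ t, Z (t + 1) = Z t + (if t + 1 ∈ R then ζ (t + 1) / q (t + 1) ^ 2 else 0) := by
    intro t
    have hsplit : R.filter (fun τ => τ ≤ t + 1) =
        R.filter (fun τ => τ ≤ t) ∪ R.filter (fun τ => τ = t + 1) := by
      ext τ
      simp only [Finset.mem_union, Finset.mem_filter]
      constructor
      · rintro ⟨h1, h2⟩
        rcases Nat.lt_or_ge τ (t + 1) with h | h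
        · exact Or.inl ⟨h1, by omega⟩
        · exact Or.inr ⟨h1, by omega⟩
      · rintro (⟨h1, h2⟩ | ⟨h1, h2⟩) <;> exact ⟨h1, by omega⟩
    have hdisj : Disjoint (R.filter (fun τ => τ ≤ t)) (R.filter (fun τ => τ = t + 1)) := by
      simp only [Finset.disjoint_left, Finset.mem_filter]
      rintro τ ⟨_, h1⟩ ⟨_, h2⟩
      omega
    simp only [hZdef, hsplit, Finset.sum_union hdisj]
    congr 1
    rw [Finset.filter_eq' R (t + 1)]
    split <;> simp
  -- main invariant
  have hQ : ∀ t, t ≤ T → η (t + 1) ^ 2 * Z t ≤ 4 * Real.log T - 1 / 324 := by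
    intro t
    induction t with
    | zero =>
      intro _
      rw [hZ0, mul_zero]
      linarith
    | succ t ih =>
      intro hle
      have ih' := ih (by omega)
      have ht1 : t + 1 ∈ Finset.Icc 1 T := by simp only [Finset.mem_Icc]; omega
      have hp : 0 < η (t + 1) := hηp (t + 1) ht1
      have hn : 0 < η (t + 2) := hηp' (t + 1) ht1
      rw [hZstep t]
      by_cases hmem : t + 1 ∈ R
      · simp only [hmem, if_true]
        -- real episode
        have hrec := hrecReal (t + 1) ht1 hmem
        set a : ℝ := ζ (t + 1) / q (t + 1) ^ 2 with ha
        have hann : 0 ≤ a := by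
          have := hζ (t + 1) ht1; have := hq (t + 1) ht1; positivity
        have hy : η (t + 1) ^ 2 * a ≤ 1 / 324 := hA (t + 1) hmem
        have hq1 := hq (t + 1) ht1
        have hLpos : (0:ℝ) < Real.log T := by linarith
        have hD : 0 < Real.log T + η (t + 1) ^ 2 * a := by positivity
        have hnD : η (t + 2) * (Real.log T + η (t + 1) ^ 2 * a) = η (t + 1) * Real.log T := by
          have e1 : Real.log T + η (t + 1) ^ 2 * a =
              (1 / η (t + 2)) * (η (t + 1) * Real.log T) := by
            rw [hrec, ha]
            field_simp
          rw [e1]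
          field_simp
        have hsq : η (t + 2) ^ 2 * (Real.log T + η (t + 1) ^ 2 * a) ^ 2 =
            η (t + 1) ^ 2 * Real.log T ^ 2 := by
          calc η (t + 2) ^ 2 * (Real.log T + η (t + 1) ^ 2 * a) ^ 2
              = (η (t + 2) * (Real.log T + η (t + 1) ^ 2 * a)) ^ 2 := by ring
            _ = (η (t + 1) * Real.log T) ^ 2 := by rw [hnD]
            _ = η (t + 1) ^ 2 * Real.log T ^ 2 := by ring
        -- reduce to inequality multiplied by D^2
        rw [← mul_le_mul_iff_of_pos_right (by positivity : (0:ℝ) < (Real.log T + η (t + 1) ^ 2 * a) ^ 2)]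
        have hlhs : η (t + 2) ^ 2 * (Z t + a) * (Real.log T + η (t + 1) ^ 2 * a) ^ 2 =
            Real.log T ^ 2 * (η (t + 1) ^ 2 * Z t + η (t + 1) ^ 2 * a) := by
          linear_combination (Z t + a) * hsq
        rw [hlhs]
        set x : ℝ := η (t + 1) ^ 2 * Z t with hx
        set y : ℝ := η (t + 1) ^ 2 * a with hyy
        have hynn : 0 ≤ y := by positivity
        have hxM : x ≤ 4 * Real.log T - 1 / 324 := ih'
        -- goal: L^2 * (x + y) ≤ M * (L + y)^2
        linarith [mul_nonneg (sq_nonneg (Real.log T)) (sub_nonneg.mpr hxM),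
          mul_nonneg (mul_nonneg hLpos.le hynn)
            (by linarith : (0:ℝ) ≤ 7 * Real.log T - 2 / 324),
          mul_nonneg (by linarith : (0:ℝ) ≤ 4 * Real.log T - 1 / 324) (sq_nonneg y),
          sq_nonneg (Real.log T + y)]
      · simp only [hmem, if_false, add_zero]
        have hm := hmono (t + 1) ht1
        have h2 : η (t + 2) ^ 2 ≤ η (t + 1) ^ 2 := by nlinarith
        calc η (t + 2) ^ 2 * Z t ≤ η (t + 1) ^ 2 * Z t :=
              mul_le_mul_of_nonneg_right h2 (hZnonneg t)
          _ ≤ 4 * Real.log T - 1 / 324 := ih'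
  -- conclude
  intro t ht
  have ht' : 1 ≤ t ∧ t ≤ T := Finset.mem_Icc.mp ht
  have hηt : 0 < η t := hηp t ht
  obtain ⟨s, rfl⟩ : ∃ s, t = s + 1 := ⟨t - 1, by omega⟩
  have hq' : η (s + 1) ^ 2 * Z s ≤ 4 * Real.log T - 1 / 324 := hQ s (by omega)
  have hb : η (s + 1) ^ 2 * Z (s + 1) ≤ 4 * Real.log T := by
    rw [hZstep s]
    by_cases hmem : s + 1 ∈ R
    · simp only [hmem, if_true]
      have := hA (s + 1) hmem
      nlinarith
    · simp only [hmem, if_false, add_zero]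
      linarith
  have hrw : η (s + 1) * Real.sqrt (Z (s + 1)) = Real.sqrt (η (s + 1) ^ 2 * Z (s + 1)) := by
    rw [Real.sqrt_mul (by positivity), Real.sqrt_sq hηt.le]
  calc η (s + 1) * Real.sqrt (∑ τ ∈ R.filter (fun τ => τ ≤ s + 1), ζ τ / q τ ^ 2)
      = Real.sqrt (η (s + 1) ^ 2 * Z (s + 1)) := hrw
    _ ≤ Real.sqrt (4 * Real.log T) := Real.sqrt_le_sqrt hb
    _ = 2 * Real.sqrt (Real.log T) := by
        rw [show (4:ℝ) * Real.log T = 2 ^ 2 * Real.log T by ring,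
          Real.sqrt_mul (by norm_num), Real.sqrt_sq (by norm_num)]
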